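/- Let L : ℝ^d → ℝ and Z : ℝ^d → (0, ∞) be twice continuously differentiable in a neighborhood of a point θ̂ ∈ ℝ^d. Define the extended function F : ℝ^d × ℝ → ℝ by F(θ, ν) = L(θ) + ν − e^ν · Z(θ), and the function ℓ : ℝ^d → ℝ by ℓ(θ) = L(θ) − log Z(θ). Set ν̂ = −log Z(θ̂), so that e^{ν̂} · Z(θ̂) = 1. Then the (d+1)×(d+1) Hessian matrix of F at the point (θ̂, ν̂) is negative definite if and only if the d×d Hessian matrix of ℓ at θ̂ is negative definite. -/

import Mathlib

open Filter ContinuousLinearMap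

set_option maxHeartbeats 2000000 in
/-- Let `L, Z : ℝ^d → ℝ` be twice continuously differentiable in a
neighborhood `s` of `θhat`, with `Z > 0`. Define the Poisson-transform
`F (θ, ν) = L θ + ν - e^ν Z θ` and the log-likelihood `ℓ θ = L θ - log (Z θ)`, and set
`ν̂ = -log (Z θhat)` (so `e^ν̂ Z θhat = 1`). Then the Hessian of `F` at `(θhat, ν̂)` is
negative definite iff the Hessian of `ℓ` at `θhat` is negative definite. Here the Hessian
quadratic form of `G` at `a` applied to `v` is `D(x ↦ DG(x)(v))(a)(v)`. -/
theorem stmt8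
    {d : ℕ}
    (L Z : EuclideanSpace ℝ (Fin d) → ℝ)
    (θhat : EuclideanSpace ℝ (Fin d))
    (hZpos : ∀ θ, 0 < Z θ)
    (s : Set (EuclideanSpace ℝ (Fin d))) (hs : s ∈ nhds θhat)
    (hL : ContDiffOn ℝ 2 L s) (hZ : ContDiffOn ℝ 2 Z s) :
    (∀ v : EuclideanSpace ℝ (Fin d) × ℝ, v ≠ 0 →
        fderiv ℝ
          (fun x : EuclideanSpace ℝ (Fin d) × ℝ =>
            fderiv ℝ (fun y : EuclideanSpace ℝ (Fin d) × ℝ =>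
              L y.1 + y.2 - Real.exp y.2 * Z y.1) x v)
          (θhat, -Real.log (Z θhat)) v < 0)
    ↔ (∀ u : EuclideanSpace ℝ (Fin d), u ≠ 0 →
        fderiv ℝ
          (fun x => fderiv ℝ (fun y => L y - Real.log (Z y)) x u) θhat u < 0) := by
  classical
  obtain ⟨U, hUs, hUo, hθU⟩ := mem_nhds_iff.mp hs
  have hZne : ∀ θ, Z θ ≠ 0 := fun θ => (hZpos θ).ne'
  have hLat : ∀ x ∈ U, ContDiffAt ℝ 2 L x := fun x hx =>
    (hL.mono hUs).contDiffAt (hUo.mem_nhds hx)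
  have hZat : ∀ x ∈ U, ContDiffAt ℝ 2 Z x := fun x hx =>
    (hZ.mono hUs).contDiffAt (hUo.mem_nhds hx)
  have hLd : ∀ x ∈ U, DifferentiableAt ℝ L x := fun x hx =>
    (hLat x hx).differentiableAt (by norm_num)
  have hZd : ∀ x ∈ U, DifferentiableAt ℝ Z x := fun x hx =>
    (hZat x hx).differentiableAt (by norm_num)
  have hL2 : DifferentiableAt ℝ (fderiv ℝ L) θhat :=
    ((hLat θhat hθU).fderiv_right (m := 1) (by norm_num)).differentiableAt one_ne_zero
  have hZ2 : DifferentiableAt ℝ (fderiv ℝ Z) θhat :=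
    ((hZat θhat hθU).fderiv_right (m := 1) (by norm_num)).differentiableAt one_ne_zero
  set ν : ℝ := -Real.log (Z θhat) with hνdef
  set b : EuclideanSpace ℝ (Fin d) →L[ℝ] ℝ := fderiv ℝ Z θhat with hbdef
  set D2L : EuclideanSpace ℝ (Fin d) →L[ℝ] EuclideanSpace ℝ (Fin d) →L[ℝ] ℝ := fderiv ℝ (fderiv ℝ L) θhat with hD2Ldef
  set D2Z : EuclideanSpace ℝ (Fin d) →L[ℝ] EuclideanSpace ℝ (Fin d) →L[ℝ] ℝ := fderiv ℝ (fderiv ℝ Z) θhat with hD2Zdef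
  have hexpν : Real.exp ν = (Z θhat)⁻¹ := by
    rw [hνdef, Real.exp_neg, Real.exp_log (hZpos θhat)]
  -- inner derivative for ℓ
  have hinnerℓ : ∀ u : EuclideanSpace ℝ (Fin d), (fun x => fderiv ℝ (fun y => L y - Real.log (Z y)) x u)
      =ᶠ[nhds θhat] (fun x => fderiv ℝ L x u - (Z x)⁻¹ * (fderiv ℝ Z x u)) := by
    intro u
    filter_upwards [hUo.mem_nhds hθU] with x hx
    have h1 := (hLd x hx).hasFDerivAt
    have h2 := ((hZd x hx).hasFDerivAt).log (hZne x)
    have hE := (h1.sub h2).fderiv; simp only [Pi.add_def, Pi.sub_def, Pi.mul_def] at hE; rw [hE]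
    simp [smul_eq_mul]
  -- Hessian of ℓ
  have hHℓ : ∀ u : EuclideanSpace ℝ (Fin d),
      fderiv ℝ (fun x => fderiv ℝ (fun y => L y - Real.log (Z y)) x u) θhat u
      = D2L u u - ((Z θhat)⁻¹ * (D2Z u u) + (b u) * (-(Z θhat ^ 2)⁻¹ * (b u))) := by
    intro u
    rw [(hinnerℓ u).fderiv_eq]
    have hA : HasFDerivAt (fun x => fderiv ℝ L x u)
        ((ContinuousLinearMap.apply ℝ ℝ u).comp D2L) θhat :=
      (ContinuousLinearMap.apply ℝ ℝ u).hasFDerivAt.comp θhat hL2.hasFDerivAt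
    have hC : HasFDerivAt (fun x => fderiv ℝ Z x u)
        ((ContinuousLinearMap.apply ℝ ℝ u).comp D2Z) θhat :=
      (ContinuousLinearMap.apply ℝ ℝ u).hasFDerivAt.comp θhat hZ2.hasFDerivAt
    have hB : HasFDerivAt (fun x => (Z x)⁻¹) ((-(Z θhat ^ 2)⁻¹) • b) θhat :=
      HasDerivAt.comp_hasFDerivAt θhat (hasDerivAt_inv (hZne θhat))
        (hZd θhat hθU).hasFDerivAt
    have hE := (hA.sub (hB.mul hC)).fderiv; simp only [Pi.add_def, Pi.sub_def, Pi.mul_def] at hE; rw [hE]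
    simp [smul_eq_mul, mul_comm]
    exact Or.inl rfl
  -- inner derivative for F
  have hinnerF : ∀ v : EuclideanSpace ℝ (Fin d) × ℝ,
      (fun x : EuclideanSpace ℝ (Fin d) × ℝ => fderiv ℝ (fun y : EuclideanSpace ℝ (Fin d) × ℝ =>
          L y.1 + y.2 - Real.exp y.2 * Z y.1) x v)
      =ᶠ[nhds (θhat, ν)]
      (fun x : EuclideanSpace ℝ (Fin d) × ℝ => fderiv ℝ L x.1 v.1 + v.2
        - (Real.exp x.2 * (fderiv ℝ Z x.1 v.1) + Z x.1 * (Real.exp x.2 * v.2))) := by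
    intro v
    filter_upwards [prod_mem_nhds (hUo.mem_nhds hθU) Filter.univ_mem] with x hx
    have hx1 : x.1 ∈ U := hx.1
    have h1 : HasFDerivAt (fun y : EuclideanSpace ℝ (Fin d) × ℝ => L y.1)
        ((fderiv ℝ L x.1).comp (fst ℝ (EuclideanSpace ℝ (Fin d)) ℝ)) x :=
      ((hLd x.1 hx1).hasFDerivAt).comp x hasFDerivAt_fst
    have h2 : HasFDerivAt (fun y : EuclideanSpace ℝ (Fin d) × ℝ => y.2) (snd ℝ (EuclideanSpace ℝ (Fin d)) ℝ) x := hasFDerivAt_snd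
    have h3 : HasFDerivAt (fun y : EuclideanSpace ℝ (Fin d) × ℝ => Real.exp y.2)
        (Real.exp x.2 • snd ℝ (EuclideanSpace ℝ (Fin d)) ℝ) x := hasFDerivAt_snd.exp
    have h4 : HasFDerivAt (fun y : EuclideanSpace ℝ (Fin d) × ℝ => Z y.1)
        ((fderiv ℝ Z x.1).comp (fst ℝ (EuclideanSpace ℝ (Fin d)) ℝ)) x :=
      ((hZd x.1 hx1).hasFDerivAt).comp x hasFDerivAt_fst
    have hE := ((h1.add h2).sub (h3.mul h4)).fderiv; simp only [Pi.add_def, Pi.sub_def, Pi.mul_def] at hE; rw [hE]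
    simp [smul_eq_mul, mul_comm]
  -- Hessian of F
  have hHF : ∀ v : EuclideanSpace ℝ (Fin d) × ℝ,
      fderiv ℝ (fun x : EuclideanSpace ℝ (Fin d) × ℝ => fderiv ℝ (fun y : EuclideanSpace ℝ (Fin d) × ℝ =>
          L y.1 + y.2 - Real.exp y.2 * Z y.1) x v) (θhat, ν) v
      = D2L v.1 v.1
        - (Real.exp ν * (D2Z v.1 v.1) + (b v.1) * (Real.exp ν * v.2)
          + (Z θhat * (v.2 * (Real.exp ν * v.2)) + (Real.exp ν * v.2) * (b v.1))) := by
    intro v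
    rw [(hinnerF v).fderiv_eq]
    have k0 : HasFDerivAt (fun x : EuclideanSpace ℝ (Fin d) × ℝ => fderiv ℝ L x.1) (D2L.comp (fst ℝ (EuclideanSpace ℝ (Fin d)) ℝ))
        (θhat, ν) := hL2.hasFDerivAt.comp _ hasFDerivAt_fst
    have k1 : HasFDerivAt (fun x : EuclideanSpace ℝ (Fin d) × ℝ => fderiv ℝ L x.1 v.1)
        ((ContinuousLinearMap.apply ℝ ℝ v.1).comp (D2L.comp (fst ℝ (EuclideanSpace ℝ (Fin d)) ℝ))) (θhat, ν) :=
      (ContinuousLinearMap.apply ℝ ℝ v.1).hasFDerivAt.comp _ k0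
    have k40 : HasFDerivAt (fun x : EuclideanSpace ℝ (Fin d) × ℝ => fderiv ℝ Z x.1) (D2Z.comp (fst ℝ (EuclideanSpace ℝ (Fin d)) ℝ))
        (θhat, ν) := hZ2.hasFDerivAt.comp _ hasFDerivAt_fst
    have k4 : HasFDerivAt (fun x : EuclideanSpace ℝ (Fin d) × ℝ => fderiv ℝ Z x.1 v.1)
        ((ContinuousLinearMap.apply ℝ ℝ v.1).comp (D2Z.comp (fst ℝ (EuclideanSpace ℝ (Fin d)) ℝ))) (θhat, ν) :=
      (ContinuousLinearMap.apply ℝ ℝ v.1).hasFDerivAt.comp _ k40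
    have k2 : HasFDerivAt (fun _ : EuclideanSpace ℝ (Fin d) × ℝ => v.2) (0 : EuclideanSpace ℝ (Fin d) × ℝ →L[ℝ] ℝ) (θhat, ν) :=
      hasFDerivAt_const _ _
    have k3 : HasFDerivAt (fun x : EuclideanSpace ℝ (Fin d) × ℝ => Real.exp x.2)
        (Real.exp ν • snd ℝ (EuclideanSpace ℝ (Fin d)) ℝ) (θhat, ν) := by
      simpa using (hasFDerivAt_snd (p := (θhat, ν))).exp
    have k5 : HasFDerivAt (fun x : EuclideanSpace ℝ (Fin d) × ℝ => Z x.1)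
        (b.comp (fst ℝ (EuclideanSpace ℝ (Fin d)) ℝ)) (θhat, ν) :=
      ((hZd θhat hθU).hasFDerivAt).comp _ hasFDerivAt_fst
    have k6 : HasFDerivAt (fun x : EuclideanSpace ℝ (Fin d) × ℝ => Real.exp x.2 * v.2)
        (v.2 • (Real.exp ν • snd ℝ (EuclideanSpace ℝ (Fin d)) ℝ)) (θhat, ν) := k3.mul_const v.2
    have hE := ((k1.add k2).sub ((k3.mul k4).add (k5.mul k6))).fderiv; simp only [Pi.add_def, Pi.sub_def, Pi.mul_def] at hE; rw [hE]
    simp [smul_eq_mul]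
    exact Or.inl rfl
  -- the key algebraic identity
  have key : ∀ v : EuclideanSpace ℝ (Fin d) × ℝ,
      fderiv ℝ (fun x : EuclideanSpace ℝ (Fin d) × ℝ => fderiv ℝ (fun y : EuclideanSpace ℝ (Fin d) × ℝ =>
          L y.1 + y.2 - Real.exp y.2 * Z y.1) x v) (θhat, ν) v
      = fderiv ℝ (fun x => fderiv ℝ (fun y => L y - Real.log (Z y)) x v.1) θhat v.1
        - (v.2 + (Z θhat)⁻¹ * (b v.1)) ^ 2 := by
    intro v
    rw [hHF v, hHℓ v.1, hexpν]
    have h2 : (Z θhat ^ 2)⁻¹ = (Z θhat)⁻¹ * (Z θhat)⁻¹ := by rw [sq, mul_inv]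
    rw [h2]
    linear_combination (-(v.2 ^ 2)) * mul_inv_cancel₀ (hZne θhat)
  constructor
  · intro h u hu
    have hv : (u, -((Z θhat)⁻¹ * (b u))) ≠ (0 : EuclideanSpace ℝ (Fin d) × ℝ) := by
      intro h0
      exact hu (congrArg Prod.fst h0)
    have := h _ hv
    rw [key (u, -((Z θhat)⁻¹ * (b u)))] at this
    simpa using this
  · intro h v hv
    rw [key v]
    by_cases hu : v.1 = 0
    · have hb0 : b v.1 = 0 := by rw [hu]; exact b.map_zero
      have hin0 : fderiv ℝ (fun x => fderiv ℝ (fun y => L y - Real.log (Z y)) x v.1)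
          θhat v.1 = 0 := by
        rw [hu]; exact (fderiv ℝ _ θhat).map_zero
      have ht : v.2 ≠ 0 := by
        intro h0
        exact hv (Prod.ext hu h0)
      have hsq : 0 < v.2 ^ 2 := pow_two_pos_of_ne_zero ht
      rw [hin0, hb0]
      simpa using hsq
    · have h1 := h v.1 hu
      have sq : (0:ℝ) ≤ (v.2 + (Z θhat)⁻¹ * (b v.1)) ^ 2 := sq_nonneg _
      linarith
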